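/- arXiv:2511.14637 — 2 statements merged into one kernel-verified Lean document; each statement's English description precedes it below -/
import Mathlib

section
/- Let x_m denote the m-th element of the van der Corput sequence in base 2. For all k ≥ 0, all a ≥ 0 with a ≤ k, and all 1 ≤ m < 2^{a+1}, the self-similarity identity holds: (2^k / 2^{a+1}) · x_{2^k + m·2^{k-a-1}} = x_m + 1/2^{a+2}. -/
/-- The van der Corput sequence in base 2: binary radical inverse of `m`. -/
noncomputable def vdc (m : ℕ) : ℝ :=
  ∑ j ∈ Finset.range m, if m.testBit j then (1 : ℝ) / 2 ^ (j + 1) else 0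

lemma vdc_eq_sum (m n : ℕ) (h : m < 2 ^ n) :
    vdc m = ∑ j ∈ Finset.range n, if m.testBit j then (1 : ℝ) / 2 ^ (j + 1) else 0 := by
  unfold vdc
  rcases le_total m n with h' | h'
  · apply Finset.sum_subset (Finset.range_subset_range.2 h')
    intro j _ hj
    simp only [Finset.mem_range, not_lt] at hj
    have : m < 2 ^ j := lt_of_lt_of_le (Nat.lt_two_pow_self (n := m)) (Nat.pow_le_pow_right (by norm_num) hj)
    simp [Nat.testBit_lt_two_pow this]
  · symm
    apply Finset.sum_subset (Finset.range_subset_range.2 h')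
    intro j _ hj
    simp only [Finset.mem_range, not_lt] at hj
    have : m < 2 ^ j := lt_of_lt_of_le h (Nat.pow_le_pow_right (by norm_num) hj)
    simp [Nat.testBit_lt_two_pow this]

theorem stmt_3 (k a m : ℕ) (ha : a + 1 ≤ k) (hm1 : 1 ≤ m) (hm2 : m < 2 ^ (a + 1)) :
    ((2 : ℝ) ^ k / 2 ^ (a + 1)) * vdc (2 ^ k + m * 2 ^ (k - a - 1)) =
      vdc m + 1 / 2 ^ (a + 2) := by
  obtain ⟨c, rfl⟩ : ∃ c, k = a + 1 + c := ⟨k - (a + 1), by omega⟩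
  have hc : a + 1 + c - a - 1 = c := by omega
  rw [hc]
  have hmc : m * 2 ^ c < 2 ^ (a + 1 + c) := by
    rw [pow_add]
    exact Nat.mul_lt_mul_of_lt_of_le hm2 le_rfl (Nat.pos_of_ne_zero (by positivity))
  have hN : 2 ^ (a + 1 + c) + m * 2 ^ c < 2 ^ (a + 1 + c + 1) := by
    rw [pow_succ]; omega
  rw [vdc_eq_sum _ _ hN, vdc_eq_sum m (a + 1) hm2]
  rw [Finset.sum_range_succ]
  have hbit_top : (2 ^ (a + 1 + c) + m * 2 ^ c).testBit (a + 1 + c) = true := by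
    rw [Nat.testBit_two_pow_add_eq, Nat.testBit_lt_two_pow hmc]
    rfl
  have hbit : ∀ j < a + 1 + c, (2 ^ (a + 1 + c) + m * 2 ^ c).testBit j = (m * 2 ^ c).testBit j := by
    intro j hj
    exact Nat.testBit_two_pow_add_gt hj _
  rw [hbit_top]
  have : ∑ j ∈ Finset.range (a + 1 + c),
      (if (2 ^ (a + 1 + c) + m * 2 ^ c).testBit j then (1 : ℝ) / 2 ^ (j + 1) else 0)
      = ∑ j ∈ Finset.range (a + 1 + c), (if (m * 2 ^ c).testBit j then (1 : ℝ) / 2 ^ (j + 1) else 0) := by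
    apply Finset.sum_congr rfl
    intro j hj
    rw [hbit j (Finset.mem_range.1 hj)]
  rw [this, add_comm (a + 1) c, Finset.sum_range_add]
  have hzero : ∑ j ∈ Finset.range c, (if (m * 2 ^ c).testBit j then (1 : ℝ) / 2 ^ (j + 1) else 0) = 0 := by
    apply Finset.sum_eq_zero
    intro j hj
    rw [mul_comm, Nat.testBit_two_pow_mul]
    simp [Nat.not_le.2 (Finset.mem_range.1 hj)]
  rw [hzero, zero_add]
  have hshift : ∀ i, (m * 2 ^ c).testBit (c + i) = m.testBit i := by
    intro i
    rw [mul_comm, Nat.testBit_two_pow_mul]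
    simp
  simp only [hshift]
  have : ∑ i ∈ Finset.range (a + 1), (if m.testBit i then (1 : ℝ) / 2 ^ (c + i + 1) else 0)
      = (1 / 2 ^ c) * ∑ i ∈ Finset.range (a + 1), (if m.testBit i then (1 : ℝ) / 2 ^ (i + 1) else 0) := by
    rw [Finset.mul_sum]
    apply Finset.sum_congr rfl
    intro i _
    split <;> [skip; ring]
    rw [pow_add, pow_add]
    ring
  rw [this]
  simp only [if_true, pow_add, pow_succ]
  have h2 : (2:ℝ) ^ a ≠ 0 := by positivity
  have h2c : (2:ℝ) ^ c ≠ 0 := by positivity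
  field_simp
end

section
/- Let 0 = x_0 < x_1 < ... < x_n < 1 be the sorted first n elements of the van der Corput sequence in base 2 together with 0. Then for every i with 0 ≤ i ≤ n and every r ≥ 1 (indices taken cyclically modulo n+1, with wrap-around intervals measured as cyclic arc length on R/Z), the cyclic length from x_i to x_{i+r} satisfies x_r − x_0 ≤ (cyclic length from x_i to x_{i+r}). -/
lemma vdc_nonneg (m : ℕ) : 0 ≤ vdc m := by
  apply Finset.sum_nonneg; intro j _; split <;> positivity

lemma geom_aux (m : ℕ) : ∑ j ∈ Finset.range m, (1:ℝ)/2^(j+1) = 1 - 1/2^m := by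
  induction m with
  | zero => simp
  | succ m ih => rw [Finset.sum_range_succ, ih]; field_simp; ring

lemma vdc_lt_one (m : ℕ) : vdc m < 1 := by
  have h1 : vdc m ≤ ∑ j ∈ Finset.range m, (1:ℝ)/2^(j+1) := by
    apply Finset.sum_le_sum; intro j _; split
    · exact le_refl _
    · positivity
  rw [geom_aux] at h1
  have : (0:ℝ) < 1/2^m := by positivity
  linarith

lemma vdc_zero' : vdc 0 = 0 := by simp [vdc]

lemma vdc_sum_ext (m K : ℕ) (h : m ≤ K) :
    vdc m = ∑ j ∈ Finset.range K, if m.testBit j then (1 : ℝ) / 2 ^ (j + 1) else 0 := by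
  apply Finset.sum_subset (Finset.range_subset_range.mpr h)
  intro j _ hj
  rw [Finset.mem_range, not_lt] at hj
  have : m.testBit j = false :=
    Nat.testBit_lt_two_pow (lt_of_lt_of_le (Nat.lt_two_pow_self (n := m)) (Nat.pow_le_pow_right (by norm_num) hj))
  simp [this]

lemma vdc_two_mul (m : ℕ) : vdc (2*m) = vdc m / 2 := by
  rw [vdc_sum_ext (2*m) (2*m+1) (by omega), Finset.sum_range_succ']
  have h0 : (2*m).testBit 0 = false := by simp [Nat.testBit_zero, Nat.mul_mod_right]
  have h2 : (2*m)/2 = m := by omega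
  simp only [Nat.testBit_add_one, h0, h2, Bool.false_eq_true, if_false, add_zero]
  rw [vdc_sum_ext m (2*m) (by omega), Finset.sum_div]
  apply Finset.sum_congr rfl
  intro j _
  split
  · rw [pow_succ]; ring
  · simp

lemma vdc_two_mul_add_one (m : ℕ) : vdc (2*m+1) = 1/2 + vdc m / 2 := by
  rw [vdc_sum_ext (2*m+1) (2*m+2) (by omega), Finset.sum_range_succ']
  have h0 : (2*m+1).testBit 0 = true := by simp [Nat.testBit_zero, Nat.mul_add_mod]
  have h2 : (2*m+1)/2 = m := by omega
  simp only [Nat.testBit_add_one, h0, h2, if_true]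
  rw [vdc_sum_ext m (2*m+1) (by omega), Finset.sum_div]
  rw [add_comm]
  norm_num
  apply Finset.sum_congr rfl
  intro j _
  split
  · rw [pow_succ]; ring
  · simp

open Finset
noncomputable def FF (N : ℕ) (t : ℝ) : ℕ :=
  ((Finset.range N).filter (fun m => vdc m < t)).card

lemma FF_mono_t {N : ℕ} {t u : ℝ} (h : t ≤ u) : FF N t ≤ FF N u := by
  apply Finset.card_le_card
  intro m hm
  simp only [Finset.mem_filter] at *
  exact ⟨hm.1, lt_of_lt_of_le hm.2 h⟩

lemma FF_le (N : ℕ) (t : ℝ) : FF N t ≤ N := by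
  simpa [FF] using Finset.card_le_card (Finset.filter_subset _ (Finset.range N))

lemma FF_nonpos {N : ℕ} {t : ℝ} (h : t ≤ 0) : FF N t = 0 := by
  rw [FF, Finset.card_eq_zero, Finset.filter_eq_empty_iff]
  intro m _
  have := vdc_nonneg m
  push_neg
  linarith

lemma FF_one_le {N : ℕ} {t : ℝ} (h : 1 ≤ t) : FF N t = N := by
  rw [FF]
  have : (Finset.range N).filter (fun m => vdc m < t) = Finset.range N := by
    apply Finset.filter_true_of_mem
    intro m _
    exact lt_of_lt_of_le (vdc_lt_one m) h
  rw [this, Finset.card_range]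

lemma FF_succ (N : ℕ) (t : ℝ) :
    FF (N+1) t = FF N t + (if vdc N < t then 1 else 0) := by
  rw [FF, FF, Finset.range_add_one, Finset.filter_insert]
  split
  · rw [Finset.card_insert_of_notMem (by simp)]
  · simp

lemma FF_mono_N {A B : ℕ} (h : B ≤ A) (t : ℝ) : FF B t ≤ FF A t := by
  apply Finset.card_le_card
  apply Finset.filter_subset_filter
  exact Finset.range_subset_range.mpr h

lemma FF_add_le (B d : ℕ) (t : ℝ) : FF (B + d) t ≤ FF B t + d := by
  induction d with
  | zero => simp
  | succ d ih =>
    rw [show B + (d+1) = (B+d)+1 by omega, FF_succ]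
    split <;> omega

lemma FF_rec (N : ℕ) (t : ℝ) : FF N t = FF ((N+1)/2) (2*t) + FF (N/2) (2*t - 1) := by
  induction N with
  | zero => simp [FF]
  | succ N ih =>
    rw [FF_succ, ih]
    rcases Nat.even_or_odd N with ⟨q, hq⟩ | ⟨q, hq⟩
    · have e1 : (N+1+1)/2 = q+1 := by omega
      have e2 : (N+1)/2 = q := by omega
      have e3 : N/2 = q := by omega
      rw [e1, e2, e3, FF_succ q (2*t)]
      have : vdc N < t ↔ vdc q < 2*t := by
        rw [hq, show q + q = 2*q by ring, vdc_two_mul]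
        constructor <;> intro <;> linarith
      simp only [this]
      omega
    · have e1 : (N+1+1)/2 = q+1 := by omega
      have e2 : (N+1)/2 = q+1 := by omega
      have e3 : N/2 = q := by omega
      rw [e1, e2, e3, FF_succ q (2*t - 1)]
      have : vdc N < t ↔ vdc q < 2*t - 1 := by
        rw [hq, vdc_two_mul_add_one]
        constructor <;> intro <;> linarith
      simp only [this]
      omega

lemma FF_diff {A B : ℕ} (h : B ≤ A) (t : ℝ) : FF A t ≤ FF B t + (A - B) := by
  have := FF_add_le B (A - B) t
  rwa [Nat.add_sub_cancel' h] at this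

lemma FF_subadd : ∀ N : ℕ, ∀ t u : ℝ, 0 ≤ t → t ≤ 1 → 0 ≤ u → u ≤ 1 →
    (if t + u ≤ 1 then FF N (t+u) else N + FF N (t+u-1)) ≤ FF N t + FF N u := by
  intro N
  induction N using Nat.strong_induction_on with
  | _ N ih =>
  match N with
  | 0 =>
    intro t u _ _ _ _
    split_ifs <;> simp [FF]
  | 1 =>
    intro t u ht0 ht1 hu0 hu1
    have hFF : ∀ v : ℝ, FF 1 v = if 0 < v then 1 else 0 := by
      intro v; rw [show (1:ℕ) = 0 + 1 by rfl, FF_succ, vdc_zero']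
      simp [FF]
    simp only [hFF]
    split_ifs <;> try omega
    all_goals linarith
  | (M+2) =>
    intro t u ht0 ht1 hu0 hu1
    set N := M + 2 with hN
    set A := (N+1)/2 with hA
    set B := N/2 with hB
    have hAB : A + B = N := by omega
    have hBA : B ≤ A := by omega
    have hABd : A = B + (A - B) := by omega
    have ihA := ih A (by omega)
    have ihB := ih B (by omega)
    have rt := FF_rec N t
    have ru := FF_rec N u
    have rs := FF_rec N (t+u)
    have rs' := FF_rec N (t+u-1)
    rw [show (N+1)/2 = A from hA.symm, show N/2 = B from hB.symm] at rt ru rs rs'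
    rw [show 2*(t+u)-1 = 2*t+2*u-1 by ring, show 2*(t+u) = 2*t+2*u by ring] at rs
    rw [show 2*(t+u-1)-1 = (2*t-1)+(2*u-1)-1 by ring, show 2*(t+u-1) = 2*t+(2*u-1)-1 by ring] at rs'
    rw [rt, ru]
    by_cases h1 : t + u ≤ 1
    · rw [if_pos h1, rs]
      by_cases ha : 2*t ≤ 1
      · by_cases hb : 2*u ≤ 1
        · -- case 1a
          have hIH := ihA (2*t) (2*u) (by linarith) ha (by linarith) hb
          have h2 : FF B (2*t+2*u-1) ≤ FF A (2*t+2*u-1) := FF_mono_N hBA _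
          have h3 : FF A (2*t+2*u) ≤ A := FF_le _ _
          split_ifs at hIH with hc
          · have h4 : FF B (2*t+2*u-1) = 0 := FF_nonpos (by linarith)
            omega
          · omega
        · -- case 1b : 2*u > 1
          have hIH := ihB (2*t) (2*u-1) (by linarith) ha (by linarith) (by linarith)
          rw [if_pos (by linarith : 2*t + (2*u-1) ≤ 1)] at hIH
          rw [show 2*t + (2*u-1) = 2*t+2*u-1 by ring] at hIH
          have h2 : FF B (2*t) ≤ FF A (2*t) := FF_mono_N hBA _
          have h3 : FF A (2*u) = A := FF_one_le (by linarith)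
          have h4 : FF A (2*t+2*u) ≤ A := FF_le _ _
          omega
      · by_cases hb : 2*u ≤ 1
        · -- case 1c symmetric
          have hIH := ihB (2*u) (2*t-1) (by linarith) hb (by linarith) (by linarith)
          rw [if_pos (by linarith : 2*u + (2*t-1) ≤ 1)] at hIH
          rw [show 2*u + (2*t-1) = 2*t+2*u-1 by ring] at hIH
          have h2 : FF B (2*u) ≤ FF A (2*u) := FF_mono_N hBA _
          have h3 : FF A (2*t) = A := FF_one_le (by linarith)
          have h4 : FF A (2*t+2*u) ≤ A := FF_le _ _
          omega
        · exact absurd h1 (by push_neg; linarith)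
    · rw [if_neg h1, rs']
      by_cases ha : 2*t ≤ 1
      · -- case 2b : then 2*u > 1
        have hb : 1 < 2*u := by by_contra hc; push_neg at hc; exact h1 (by linarith)
        have hIH := ihA (2*t) (2*u-1) (by linarith) ha (by linarith) (by linarith)
        rw [if_neg (by push_neg; linarith : ¬ (2*t + (2*u-1) ≤ 1))] at hIH
        have h2 : FF A (2*u-1) ≤ FF B (2*u-1) + (A - B) := FF_diff hBA _
        have h3 : FF A (2*u) = A := FF_one_le (by linarith)
        have h4 : FF B ((2*t-1)+(2*u-1)-1) = 0 := FF_nonpos (by linarith)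
        omega
      · by_cases hb : 2*u ≤ 1
        · -- case 2c symmetric
          have ha' : 1 < 2*t := by push_neg at ha; exact ha
          have hIH := ihA (2*u) (2*t-1) (by linarith) hb (by linarith) (by linarith)
          rw [if_neg (by push_neg; linarith : ¬ (2*u + (2*t-1) ≤ 1))] at hIH
          rw [show 2*u + (2*t-1) - 1 = 2*t+(2*u-1)-1 by ring] at hIH
          have h2 : FF A (2*t-1) ≤ FF B (2*t-1) + (A - B) := FF_diff hBA _
          have h3 : FF A (2*t) = A := FF_one_le (by linarith)
          have h4 : FF B ((2*t-1)+(2*u-1)-1) = 0 := FF_nonpos (by linarith)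
          omega
        · -- case 2a : both > 1
          push_neg at ha hb
          have hIH := ihB (2*t-1) (2*u-1) (by linarith) (by linarith) (by linarith) (by linarith)
          have h3 : FF A (2*t) = A := FF_one_le (by linarith)
          have h3' : FF A (2*u) = A := FF_one_le (by linarith)
          by_cases hw : (2*t-1) + (2*u-1) ≤ 1
          · rw [if_pos hw] at hIH
            have h4 : FF B ((2*t-1)+(2*u-1)-1) = 0 := FF_nonpos (by linarith)
            have h5 : FF A (2*t+(2*u-1)-1) ≤ FF B (2*t+(2*u-1)-1) + (A-B) := FF_diff hBA _
            have h6 : FF B (2*t+(2*u-1)-1) = FF B ((2*t-1)+(2*u-1)) := by ring_nf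
            omega
          · rw [if_neg hw] at hIH
            have h4 : FF A (2*t+(2*u-1)-1) = A := FF_one_le (by linarith)
            have h5 : FF B ((2*t-1)+(2*u-1)-1) ≤ FF B ((2*t-1)+(2*u-1)-1) := le_refl _
            have h6 : ((2*t-1)+(2*u-1)-1) = ((2*t-1)+(2*u-1)-1) := rfl
            omega

theorem stmt_10 (n : ℕ) (x : ℕ → ℝ)
    (hx0 : x 0 = 0)
    (hmono : ∀ i j, i < j → j ≤ n → x i < x j)
    (hlt1 : x n < 1)
    (himg : ∀ y : ℝ, (∃ i, i ≤ n ∧ x i = y) ↔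
      (y = 0 ∨ ∃ m, 1 ≤ m ∧ m ≤ n ∧ vdc m = y)) :
    ∀ i ≤ n, ∀ r, 1 ≤ r → r ≤ n →
      x r - x 0 ≤
        (if i + r ≤ n then x (i + r) - x i
         else (1 - x i) + x ((i + r) % (n + 1))) := by
  classical
  -- basic facts about x
  have hxle : ∀ i ≤ n, x i ≤ x n := by
    intro i hi
    rcases eq_or_lt_of_le hi with h | h
    · rw [h]
    · exact le_of_lt (hmono i n h le_rfl)
  have hxnn : ∀ i ≤ n, 0 ≤ x i := by
    intro i hi
    rcases Nat.eq_zero_or_pos i with h | h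
    · rw [h, hx0]
    · rw [← hx0]; exact le_of_lt (hmono 0 i h hi)
  have hx1 : ∀ i ≤ n, x i < 1 := fun i hi => lt_of_le_of_lt (hxle i hi) hlt1
  have hinjx : Set.InjOn x (Finset.range (n+1) : Set ℕ) := by
    intro i hi j hj hij
    simp only [Finset.coe_range, Set.mem_Iio] at hi hj
    by_contra hne
    rcases Nat.lt_or_ge i j with h | h
    · exact absurd hij (ne_of_lt (hmono i j h (by omega)))
    · exact absurd hij.symm (ne_of_lt (hmono j i (by omega) (by omega)))
  set S : Finset ℝ := (Finset.range (n+1)).image vdc with hS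
  have hmemS : ∀ i ≤ n, x i ∈ S := by
    intro i hi
    rcases (himg (x i)).mp ⟨i, hi, rfl⟩ with h | ⟨m, hm1, hmn, hm⟩
    · rw [h, ← vdc_zero']
      exact Finset.mem_image_of_mem vdc (by simp)
    · rw [← hm]
      exact Finset.mem_image_of_mem vdc (by simp; omega)
  have hsub : (Finset.range (n+1)).image x ⊆ S := by
    intro y hy
    rcases Finset.mem_image.mp hy with ⟨i, hi, rfl⟩
    exact hmemS i (by simpa using Finset.mem_range.mp hi |>.le |> Nat.lt_succ_iff.mp ∘ fun _ => Finset.mem_range.mp hi)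
  have hcardx : ((Finset.range (n+1)).image x).card = n + 1 := by
    rw [Finset.card_image_of_injOn hinjx, Finset.card_range]
  have hSeq : S = (Finset.range (n+1)).image x := by
    apply (Finset.eq_of_subset_of_card_le hsub _).symm
    calc S.card ≤ (Finset.range (n+1)).card := Finset.card_image_le
    _ = n + 1 := Finset.card_range _
    _ = ((Finset.range (n+1)).image x).card := hcardx.symm
  have hScard : S.card = n + 1 := by rw [hSeq, hcardx]
  have hinjv : Set.InjOn vdc (Finset.range (n+1) : Set ℕ) := by
    rw [← Finset.card_range (n+1)] at hScard
    exact Finset.card_image_iff.mp hScard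
  -- key : FF (n+1) t = card of S below t
  have key : ∀ t : ℝ, FF (n+1) t = (S.filter (fun y => y < t)).card := by
    intro t
    rw [FF, hS, Finset.filter_image]
    rw [Finset.card_image_of_injOn (hinjv.mono (by
      intro a ha
      simp only [Finset.coe_filter, Set.mem_setOf_eq] at ha
      simpa using ha.1))]
  have claimA : ∀ j ≤ n, FF (n+1) (x j) = j := by
    intro j hj
    rw [key, hSeq, Finset.filter_image]
    have : Finset.filter (fun i => x i < x j) (Finset.range (n+1)) = Finset.range j := by
      ext i
      simp only [Finset.mem_filter, Finset.mem_range]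
      constructor
      · rintro ⟨hi, hxi⟩
        by_contra hij
        push_neg at hij
        rcases eq_or_lt_of_le hij with h | h
        · rw [h] at hxi; exact lt_irrefl _ hxi
        · exact absurd (hmono j i h (by omega)) (by linarith)
      · intro hij
        exact ⟨by omega, hmono i j hij hj⟩
    rw [this, Finset.card_image_of_injOn (hinjx.mono (by
      intro a ha
      simp only [Finset.coe_range, Set.mem_Iio] at *
      omega)), Finset.card_range]
  have step3 : ∀ (t : ℝ), ∀ j ≤ n, FF (n+1) t ≤ j → t ≤ x j := by
    intro t j hj hFF
    by_contra hc
    push_neg at hc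
    have hsub2 : (Finset.range (j+1)).image x ⊆ S.filter (fun y => y < t) := by
      intro y hy
      rcases Finset.mem_image.mp hy with ⟨i, hi, rfl⟩
      have hi' : i ≤ j := by simpa [Nat.lt_succ_iff] using hi
      refine Finset.mem_filter.mpr ⟨hmemS i (by omega), ?_⟩
      calc x i ≤ x j := by
            rcases eq_or_lt_of_le hi' with h | h
            · rw [h]
            · exact le_of_lt (hmono i j h hj)
        _ < t := hc
    have : j + 1 ≤ FF (n+1) t := by
      rw [key]
      calc j + 1 = ((Finset.range (j+1)).image x).card := by
            rw [Finset.card_image_of_injOn (hinjx.mono (by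
              intro a ha
              simp only [Finset.coe_range, Set.mem_Iio] at *
              omega)), Finset.card_range]
        _ ≤ _ := Finset.card_le_card hsub2
    omega
  -- main argument
  intro i hi r hr1 hrn
  have hxi0 := hxnn i hi
  have hxr0 := hxnn r hrn
  have hxi1 := hx1 i hi
  have hxr1 := hx1 r hrn
  have hmain := FF_subadd (n+1) (x i) (x r) hxi0 (le_of_lt hxi1) hxr0 (le_of_lt hxr1)
  rw [claimA i hi, claimA r hrn] at hmain
  rw [hx0]
  by_cases hir : i + r ≤ n
  · rw [if_pos hir]
    by_cases hsum : x i + x r ≤ 1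
    · rw [if_pos hsum] at hmain
      have := step3 (x i + x r) (i+r) hir hmain
      linarith
    · rw [if_neg hsum] at hmain
      omega
  · rw [if_neg hir]
    have hmod : (i + r) % (n + 1) = i + r - (n + 1) := by
      rw [Nat.mod_eq_sub_mod (by omega), Nat.mod_eq_of_lt (by omega)]
    rw [hmod]
    set j := i + r - (n+1) with hj
    have hjn : j ≤ n := by omega
    by_cases hsum : x i + x r ≤ 1
    · have := hxnn j hjn
      linarith
    · rw [if_neg hsum] at hmain
      have hFF : FF (n+1) (x i + x r - 1) ≤ j := by omega
      have := step3 (x i + x r - 1) j hjn hFF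
      linarith
end
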